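/- For a graph G with nonnegative edge weights w, the function e_w(X) (total weight of edges incident to X) is infinite-alternating, and the weighted cut function d_w is weakly infinite-alternating; moreover V_{d_w}(A_0; A_1, ..., A_k) = 0 for all k ≥ 3 and pairwise disjoint A_0, ..., A_k. -/

import Mathlib

noncomputable def altSum {J : Type*} (φ : Set J → ℝ) (A₀ : Set J) {k : ℕ}
    (A : Fin k → Set J) : ℝ :=
  ∑ K : Finset (Fin k), (-1 : ℝ) ^ K.card * φ (A₀ ∪ ⋃ i ∈ K, A i)

open Classical in
/-- The weighted cut function `d_w`: total weight of edges with exactly one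
endpoint in `X`. -/
noncomputable def cutFun {V : Type*} [Fintype V] (G : SimpleGraph V)
    (w : Sym2 V → ℝ) (X : Set V) : ℝ :=
  ∑ e ∈ G.edgeFinset, if (∃ u ∈ e, u ∈ X) ∧ (∃ u ∈ e, u ∉ X) then w e else 0

open Classical in
/-- `e_w`: total weight of edges incident to `X`. -/
noncomputable def incFun {V : Type*} [Fintype V] (G : SimpleGraph V)
    (w : Sym2 V → ℝ) (X : Set V) : ℝ :=
  ∑ e ∈ G.edgeFinset, if ∃ u ∈ e, u ∈ X then w e else 0

open Finset

section Aux

variable {V : Type*}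

open Classical in
/-- Indicator that no vertex satisfying `Q` lies in `X`. -/
noncomputable def ii (Q : V → Prop) (X : Set V) : ℝ :=
  if ∃ u, Q u ∧ u ∈ X then 0 else 1

lemma ii_nonneg (Q : V → Prop) (X : Set V) : 0 ≤ ii Q X := by
  unfold ii; split <;> norm_num

lemma ii_le_one (Q : V → Prop) (X : Set V) : ii Q X ≤ 1 := by
  unfold ii; split <;> norm_num

lemma one_sub_ii_nonneg (Q : V → Prop) (X : Set V) : 0 ≤ 1 - ii Q X := by
  have := ii_le_one Q X; linarith

lemma prod_one_sub_ii_nonneg (Q : V → Prop) {k : ℕ} (A : Fin k → Set V) :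
    0 ≤ ∏ i : Fin k, (1 - ii Q (A i)) :=
  Finset.prod_nonneg fun i _ => one_sub_ii_nonneg Q (A i)

lemma ii_union (Q : V → Prop) (A₀ : Set V) {k : ℕ} (A : Fin k → Set V)
    (K : Finset (Fin k)) :
    ii Q (A₀ ∪ ⋃ i ∈ K, A i) = ii Q A₀ * ∏ i ∈ K, ii Q (A i) := by
  classical
  by_cases h0 : ∃ u, Q u ∧ u ∈ A₀
  · obtain ⟨u, hQ, hu⟩ := h0
    have h1 : ii Q (A₀ ∪ ⋃ i ∈ K, A i) = 0 := by
      unfold ii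
      rw [if_pos ⟨u, hQ, Or.inl hu⟩]
    have h2 : ii Q A₀ = 0 := by
      unfold ii; rw [if_pos ⟨u, hQ, hu⟩]
    rw [h1, h2, zero_mul]
  · by_cases h1 : ∃ i ∈ K, ∃ u, Q u ∧ u ∈ A i
    · obtain ⟨i, hi, u, hQ, hu⟩ := h1
      have hL : ii Q (A₀ ∪ ⋃ i ∈ K, A i) = 0 := by
        unfold ii
        rw [if_pos ⟨u, hQ, Or.inr (Set.mem_biUnion hi hu)⟩]
      have hR : ∏ j ∈ K, ii Q (A j) = 0 :=
        Finset.prod_eq_zero hi (by unfold ii; rw [if_pos ⟨u, hQ, hu⟩])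
      rw [hL, hR, mul_zero]
    · have hL : ii Q (A₀ ∪ ⋃ i ∈ K, A i) = 1 := by
        unfold ii
        rw [if_neg]
        rintro ⟨u, hQ, hu⟩
        rcases hu with hu | hu
        · exact h0 ⟨u, hQ, hu⟩
        · obtain ⟨i, hi, hu⟩ := Set.mem_iUnion₂.mp hu
          exact h1 ⟨i, hi, u, hQ, hu⟩
      have h2 : ii Q A₀ = 1 := by
        unfold ii; rw [if_neg h0]
      have hR : ∏ j ∈ K, ii Q (A j) = 1 :=
        Finset.prod_eq_one fun j hj => by
          unfold ii
          rw [if_neg fun ⟨u, hQ, hu⟩ => h1 ⟨j, hj, u, hQ, hu⟩]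
      rw [hL, h2, hR, one_mul]

lemma prod_one_sub {k : ℕ} (c : Fin k → ℝ) :
    ∑ K : Finset (Fin k), (-1 : ℝ) ^ K.card * ∏ i ∈ K, c i
      = ∏ i : Fin k, (1 - c i) := by
  classical
  have h := Finset.prod_add (fun i => -c i) (fun _ => (1 : ℝ)) (univ : Finset (Fin k))
  simp only [Finset.prod_const_one, mul_one, Finset.powerset_univ] at h
  have h2 : ∀ K : Finset (Fin k), ∏ i ∈ K, -c i = (-1 : ℝ) ^ K.card * ∏ i ∈ K, c i := by
    intro K
    calc ∏ i ∈ K, -c i = ∏ i ∈ K, (-1 : ℝ) * c i := by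
          refine Finset.prod_congr rfl fun i _ => by ring
      _ = (∏ _i ∈ K, (-1 : ℝ)) * ∏ i ∈ K, c i := Finset.prod_mul_distrib
      _ = (-1 : ℝ) ^ K.card * ∏ i ∈ K, c i := by rw [Finset.prod_const]
  calc ∑ K : Finset (Fin k), (-1 : ℝ) ^ K.card * ∏ i ∈ K, c i
      = ∑ K : Finset (Fin k), ∏ i ∈ K, -c i :=
        (Finset.sum_congr rfl fun K _ => (h2 K).symm)
    _ = ∏ i : Fin k, (-c i + 1) := h.symm
    _ = ∏ i : Fin k, (1 - c i) := Finset.prod_congr rfl fun i _ => by ring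

lemma sum_neg_one_pow_card {k : ℕ} (hk : 1 ≤ k) :
    ∑ K : Finset (Fin k), (-1 : ℝ) ^ K.card = 0 := by
  have h := prod_one_sub (fun _ : Fin k => (1 : ℝ))
  simp only [Finset.prod_const_one, mul_one, sub_self] at h
  rw [h]
  exact Finset.prod_eq_zero (Finset.mem_univ (⟨0, hk⟩ : Fin k)) rfl

lemma sum_ii (Q : V → Prop) (A₀ : Set V) {k : ℕ} (A : Fin k → Set V) :
    ∑ K : Finset (Fin k), (-1 : ℝ) ^ K.card * ii Q (A₀ ∪ ⋃ i ∈ K, A i)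
      = ii Q A₀ * ∏ i : Fin k, (1 - ii Q (A i)) := by
  calc ∑ K : Finset (Fin k), (-1 : ℝ) ^ K.card * ii Q (A₀ ∪ ⋃ i ∈ K, A i)
      = ∑ K : Finset (Fin k), ii Q A₀ * ((-1 : ℝ) ^ K.card * ∏ i ∈ K, ii Q (A i)) := by
        refine Finset.sum_congr rfl fun K _ => ?_
        rw [ii_union]; ring
    _ = ii Q A₀ * ∑ K : Finset (Fin k), (-1 : ℝ) ^ K.card * ∏ i ∈ K, ii Q (A i) := by
        rw [Finset.mul_sum]
    _ = ii Q A₀ * ∏ i : Fin k, (1 - ii Q (A i)) := by rw [prod_one_sub]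

/-- If `a` lies in at most one of `≥ 2` pairwise disjoint sets, the product vanishes. -/
lemma prod_eq_vertex_zero {k : ℕ} (hk : 2 ≤ k) (A : Fin k → Set V)
    (hA : ∀ i j, i ≠ j → Disjoint (A i) (A j)) (a : V) :
    ∏ i : Fin k, (1 - ii (fun u => u = a) (A i)) = 0 := by
  classical
  have h01 : (⟨0, by omega⟩ : Fin k) ≠ ⟨1, by omega⟩ := by
    simp [Fin.ext_iff]
  have : ∃ i : Fin k, a ∉ A i := by
    by_cases h : a ∈ A ⟨0, by omega⟩
    · exact ⟨⟨1, by omega⟩, Set.disjoint_left.mp (hA _ _ h01) h⟩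
    · exact ⟨⟨0, by omega⟩, h⟩
  obtain ⟨i, hi⟩ := this
  refine Finset.prod_eq_zero (Finset.mem_univ i) ?_
  have : ii (fun u => u = a) (A i) = 1 := by
    unfold ii
    rw [if_neg]
    rintro ⟨u, rfl, hu⟩
    exact hi hu
  rw [this, sub_self]

lemma exists_avoid {k : ℕ} (hk : 3 ≤ k) (A : Fin k → Set V)
    (hA : ∀ i j, i ≠ j → Disjoint (A i) (A j)) (a b : V) :
    ∃ i : Fin k, a ∉ A i ∧ b ∉ A i := by
  by_contra h
  push_neg at h
  have h' : ∀ i : Fin k, a ∈ A i ∨ b ∈ A i := by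
    intro i
    by_cases ha : a ∈ A i
    · exact Or.inl ha
    · exact Or.inr (h i ha)
  set i0 : Fin k := ⟨0, by omega⟩
  set i1 : Fin k := ⟨1, by omega⟩
  set i2 : Fin k := ⟨2, by omega⟩
  have h01 : i0 ≠ i1 := by simp [i0, i1, Fin.ext_iff]
  have h02 : i0 ≠ i2 := by simp [i0, i2, Fin.ext_iff]
  have h12 : i1 ≠ i2 := by simp [i1, i2, Fin.ext_iff]
  rcases h' i0 with h0 | h0 <;> rcases h' i1 with h1 | h1 <;> rcases h' i2 with h2 | h2 <;>
    first
      | exact Set.disjoint_left.mp (hA i0 i1 h01) h0 h1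
      | exact Set.disjoint_left.mp (hA i0 i2 h02) h0 h2
      | exact Set.disjoint_left.mp (hA i1 i2 h12) h1 h2

/-- Pointwise decomposition of the symmetric "exactly one endpoint" quantity. -/
lemma sym_ii_eq (a b : V) (X : Set V) :
    1 - ii (fun u => u ∈ (s(a,b) : Sym2 V)) X - ii (fun u => u ∈ (s(a,b) : Sym2 V)) Xᶜ
      = ii (fun u => u = a) X + ii (fun u => u = b) X
          - 2 * ii (fun u => u = a ∨ u = b) X := by
  by_cases ha : a ∈ X <;> by_cases hb : b ∈ X <;>
    simp [ii, Sym2.mem_iff, Set.mem_compl_iff, ha, hb] <;> norm_num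

/-- Alternating sum of an `ii`-affine edge contribution (incidence version). -/
lemma edge_sum_inc (Q : V → Prop) (c : ℝ) (A₀ : Set V) {k : ℕ} (hk : 1 ≤ k)
    (A : Fin k → Set V) :
    ∑ K : Finset (Fin k), (-1 : ℝ) ^ K.card * (c * (1 - ii Q (A₀ ∪ ⋃ i ∈ K, A i)))
      = -(c * (ii Q A₀ * ∏ i : Fin k, (1 - ii Q (A i)))) := by
  calc ∑ K : Finset (Fin k), (-1 : ℝ) ^ K.card * (c * (1 - ii Q (A₀ ∪ ⋃ i ∈ K, A i)))
      = ∑ K : Finset (Fin k),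
          (c * (-1 : ℝ) ^ K.card - c * ((-1 : ℝ) ^ K.card * ii Q (A₀ ∪ ⋃ i ∈ K, A i))) := by
        refine Finset.sum_congr rfl fun K _ => by ring
    _ = c * ∑ K : Finset (Fin k), (-1 : ℝ) ^ K.card
          - c * ∑ K : Finset (Fin k), (-1 : ℝ) ^ K.card * ii Q (A₀ ∪ ⋃ i ∈ K, A i) := by
        rw [Finset.sum_sub_distrib, Finset.mul_sum, Finset.mul_sum]
    _ = -(c * (ii Q A₀ * ∏ i : Fin k, (1 - ii Q (A i)))) := by
        rw [sum_neg_one_pow_card hk, sum_ii]; ring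

/-- Alternating sum of the cut edge contribution. -/
lemma edge_sum_cut (a b : V) (c : ℝ) (A₀ : Set V) {k : ℕ} (hk : 2 ≤ k)
    (A : Fin k → Set V) (hA : ∀ i j, i ≠ j → Disjoint (A i) (A j)) :
    ∑ K : Finset (Fin k), (-1 : ℝ) ^ K.card *
        (c * (ii (fun u => u = a) (A₀ ∪ ⋃ i ∈ K, A i)
          + ii (fun u => u = b) (A₀ ∪ ⋃ i ∈ K, A i)
          - 2 * ii (fun u => u = a ∨ u = b) (A₀ ∪ ⋃ i ∈ K, A i)))
      = -(2 * c * (ii (fun u => u = a ∨ u = b) A₀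
          * ∏ i : Fin k, (1 - ii (fun u => u = a ∨ u = b) (A i)))) := by
  calc ∑ K : Finset (Fin k), (-1 : ℝ) ^ K.card *
        (c * (ii (fun u => u = a) (A₀ ∪ ⋃ i ∈ K, A i)
          + ii (fun u => u = b) (A₀ ∪ ⋃ i ∈ K, A i)
          - 2 * ii (fun u => u = a ∨ u = b) (A₀ ∪ ⋃ i ∈ K, A i)))
      = ∑ K : Finset (Fin k),
          (c * ((-1 : ℝ) ^ K.card * ii (fun u => u = a) (A₀ ∪ ⋃ i ∈ K, A i))
            + c * ((-1 : ℝ) ^ K.card * ii (fun u => u = b) (A₀ ∪ ⋃ i ∈ K, A i))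
            - 2 * c * ((-1 : ℝ) ^ K.card * ii (fun u => u = a ∨ u = b) (A₀ ∪ ⋃ i ∈ K, A i))) := by
        refine Finset.sum_congr rfl fun K _ => by ring
    _ = (c * ∑ K : Finset (Fin k), (-1 : ℝ) ^ K.card * ii (fun u => u = a) (A₀ ∪ ⋃ i ∈ K, A i)
          + c * ∑ K : Finset (Fin k), (-1 : ℝ) ^ K.card * ii (fun u => u = b) (A₀ ∪ ⋃ i ∈ K, A i))
          - 2 * c * ∑ K : Finset (Fin k), (-1 : ℝ) ^ K.card * ii (fun u => u = a ∨ u = b) (A₀ ∪ ⋃ i ∈ K, A i) := by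
        rw [Finset.sum_sub_distrib, Finset.sum_add_distrib, Finset.mul_sum, Finset.mul_sum,
          Finset.mul_sum]
    _ = -(2 * c * (ii (fun u => u = a ∨ u = b) A₀
          * ∏ i : Fin k, (1 - ii (fun u => u = a ∨ u = b) (A i)))) := by
        rw [sum_ii, sum_ii, sum_ii, prod_eq_vertex_zero hk A hA a, prod_eq_vertex_zero hk A hA b]
        ring

end Aux

section Main

variable {V : Type*} [Fintype V]

open Classical in
lemma incFun_eq (G : SimpleGraph V) (w : Sym2 V → ℝ) :
    incFun G w = fun X => ∑ e ∈ G.edgeFinset, w e * (1 - ii (fun u => u ∈ e) X) := by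
  funext X
  unfold incFun
  refine Finset.sum_congr rfl fun e he => ?_
  by_cases h : ∃ u ∈ e, u ∈ X <;> simp [ii, h]

open Classical in
lemma cutFun_eq (G : SimpleGraph V) (w : Sym2 V → ℝ) :
    cutFun G w = fun X => ∑ e ∈ G.edgeFinset,
      w e * (1 - ii (fun u => u ∈ e) X - ii (fun u => u ∈ e) Xᶜ) := by
  funext X
  unfold cutFun
  refine Finset.sum_congr rfl fun e he => ?_
  induction e using Sym2.ind with
  | _ a b =>
    by_cases ha : a ∈ X <;> by_cases hb : b ∈ X <;>
      simp [ii, Sym2.mem_iff, Set.mem_compl_iff, ha, hb]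

lemma altSum_sum {ι : Type*} (s : Finset ι) (F : ι → Set V → ℝ) (A₀ : Set V)
    {k : ℕ} (A : Fin k → Set V) :
    altSum (fun X => ∑ e ∈ s, F e X) A₀ A
      = ∑ e ∈ s, ∑ K : Finset (Fin k),
          (-1 : ℝ) ^ K.card * F e (A₀ ∪ ⋃ i ∈ K, A i) := by
  unfold altSum
  rw [Finset.sum_comm]
  exact Finset.sum_congr rfl fun K _ => Finset.mul_sum _ _ _

end Main

theorem stmt9 {V : Type*} [Fintype V] (G : SimpleGraph V)
    (w : Sym2 V → ℝ) (hw : ∀ e, 0 ≤ w e) :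
    (incFun G w ∅ = 0 ∧ ∀ (k : ℕ), 1 ≤ k → ∀ (A₀ : Set V) (A : Fin k → Set V),
        altSum (incFun G w) A₀ A ≤ 0) ∧
    (cutFun G w ∅ = 0 ∧ ∀ (k : ℕ), 2 ≤ k → ∀ (A₀ : Set V) (A : Fin k → Set V),
        (∀ i, Disjoint A₀ (A i)) → (∀ i j, i ≠ j → Disjoint (A i) (A j)) →
        altSum (cutFun G w) A₀ A ≤ 0) ∧
    (∀ (k : ℕ), 3 ≤ k → ∀ (A₀ : Set V) (A : Fin k → Set V),
        (∀ i, Disjoint A₀ (A i)) → (∀ i j, i ≠ j → Disjoint (A i) (A j)) →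
        altSum (cutFun G w) A₀ A = 0) := by
  refine ⟨⟨?_, ?_⟩, ⟨?_, ?_⟩, ?_⟩
  · simp [incFun]
  · intro k hk A₀ A
    rw [incFun_eq, altSum_sum]
    refine Finset.sum_nonpos fun e he => ?_
    rw [edge_sum_inc (fun u => u ∈ e) (w e) A₀ hk A]
    have h1 : 0 ≤ w e := hw e
    have h2 : 0 ≤ ii (fun u => u ∈ e) A₀ := ii_nonneg _ _
    have h3 : 0 ≤ ∏ i : Fin k, (1 - ii (fun u => u ∈ e) (A i)) :=
      prod_one_sub_ii_nonneg _ A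
    have h4 : 0 ≤ w e * (ii (fun u => u ∈ e) A₀
        * ∏ i : Fin k, (1 - ii (fun u => u ∈ e) (A i))) :=
      mul_nonneg h1 (mul_nonneg h2 h3)
    linarith
  · simp [cutFun]
  · intro k hk A₀ A hA₀ hA
    rw [cutFun_eq, altSum_sum]
    refine Finset.sum_nonpos fun e he => ?_
    induction e using Sym2.ind with
    | _ a b =>
      simp only [sym_ii_eq]
      rw [edge_sum_cut a b (w s(a,b)) A₀ hk A hA]
      have h1 : 0 ≤ w s(a,b) := hw _
      have h2 : 0 ≤ ii (fun u => u = a ∨ u = b) A₀ := ii_nonneg _ _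
      have h3 : 0 ≤ ∏ i : Fin k, (1 - ii (fun u => u = a ∨ u = b) (A i)) :=
        prod_one_sub_ii_nonneg _ A
      have h4 : 0 ≤ w s(a,b) * (ii (fun u => u = a ∨ u = b) A₀
          * ∏ i : Fin k, (1 - ii (fun u => u = a ∨ u = b) (A i))) :=
        mul_nonneg h1 (mul_nonneg h2 h3)
      linarith
  · intro k hk A₀ A hA₀ hA
    rw [cutFun_eq, altSum_sum]
    refine Finset.sum_eq_zero fun e he => ?_
    induction e using Sym2.ind with
    | _ a b =>
      simp only [sym_ii_eq]
      rw [edge_sum_cut a b (w s(a,b)) A₀ (by omega) A hA]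
      obtain ⟨i, hia, hib⟩ := exists_avoid hk A hA a b
      have hone : ii (fun u => u = a ∨ u = b) (A i) = 1 := by
        unfold ii
        rw [if_neg]
        rintro ⟨u, (rfl | rfl), hu⟩
        · exact hia hu
        · exact hib hu
      have hzero : ∏ j : Fin k, (1 - ii (fun u => u = a ∨ u = b) (A j)) = 0 :=
        Finset.prod_eq_zero (Finset.mem_univ i) (by rw [hone, sub_self])
      rw [hzero]
      ring
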